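/- Fix λ₁, λ₂ > 0, ν₂ > 0, A ≥ ν₂(λ₁λ₂)^{-1/2}, n ∈ ℕ with n ≥ 1, and Ψ(x) = a₀² − (x₁²/λ₁ + x₂²/λ₂ + 2A x₁ x₂ (λ₁λ₂)^{-1/2}). Then for every x = (0, x₂) with x₂ ≥ n^{-1/2}: nλ₁[Ψ(x + n^{-1/2}e^(1)) − Ψ(x)] + nλ₂[Ψ(x + n^{-1/2}e^(2)) − Ψ(x)] + n(λ₂ + ν₂)[Ψ(x − n^{-1/2}e^(2)) − Ψ(x)] ≤ −3. -/

import Mathlib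

set_option maxHeartbeats 800000


theorem discrete_generator_face (l₁ l₂ ν₂ a₀ A : ℝ) (n : ℕ) (hn : 1 ≤ n)
    (hl₁ : 0 < l₁) (hl₂ : 0 < l₂) (hν₂ : 0 < ν₂)
    (hA : ν₂ * (l₁ * l₂) ^ (-(1 / 2) : ℝ) ≤ A)
    (Ψ : ℝ × ℝ → ℝ)
    (hΨ : ∀ x : ℝ × ℝ,
      Ψ x = a₀ ^ 2 - (x.1 ^ 2 / l₁ + x.2 ^ 2 / l₂ + 2 * A * x.1 * x.2 * (l₁ * l₂) ^ (-(1 / 2) : ℝ)))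
    (x₂ : ℝ) (hx₂ : (n : ℝ) ^ (-(1 / 2) : ℝ) ≤ x₂) :
    (n : ℝ) * l₁ * (Ψ ((0 : ℝ) + (n : ℝ) ^ (-(1 / 2) : ℝ), x₂) - Ψ (0, x₂))
      + (n : ℝ) * l₂ * (Ψ (0, x₂ + (n : ℝ) ^ (-(1 / 2) : ℝ)) - Ψ (0, x₂))
      + (n : ℝ) * (l₂ + ν₂) * (Ψ (0, x₂ - (n : ℝ) ^ (-(1 / 2) : ℝ)) - Ψ (0, x₂)) ≤ -3 := by
  have hnpos : (0 : ℝ) < n := by exact_mod_cast Nat.lt_of_lt_of_le Nat.zero_lt_one hn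
  set h : ℝ := (n : ℝ) ^ (-(1 / 2) : ℝ) with hhdef
  set c : ℝ := (l₁ * l₂) ^ (-(1 / 2) : ℝ) with hcdef
  have hh : 0 < h := Real.rpow_pos_of_pos hnpos _
  have hc : 0 < c := Real.rpow_pos_of_pos (by positivity) _
  have hh2 : (n : ℝ) * h ^ 2 = 1 := by
    have : h ^ 2 = (n : ℝ) ^ ((-(1 / 2) : ℝ) * 2) := by
      rw [hhdef, ← Real.rpow_natCast ((n : ℝ) ^ (-(1 / 2) : ℝ)) 2,
        ← Real.rpow_mul hnpos.le]
      norm_num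
    rw [this]
    norm_num
    rw [Real.rpow_neg_one]
    field_simp
  have hc2 : c ^ 2 * (l₁ * l₂) = 1 := by
    have : c ^ 2 = (l₁ * l₂) ^ ((-(1 / 2) : ℝ) * 2) := by
      rw [hcdef, ← Real.rpow_natCast ((l₁ * l₂) ^ (-(1 / 2) : ℝ)) 2,
        ← Real.rpow_mul (by positivity : (0:ℝ) ≤ l₁ * l₂)]
      norm_num
    rw [this]
    norm_num
    rw [Real.rpow_neg_one]
    field_simp
  simp only [hΨ]
  have key : (n:ℝ) * l₁ * (-(((0 + h)^2 - 0^2) / l₁ + 2 * A * (0 + h - 0) * x₂ * c))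
      + (n:ℝ) * l₂ * (-(((x₂ + h)^2 - x₂^2) / l₂))
      + (n:ℝ) * (l₂ + ν₂) * (-(((x₂ - h)^2 - x₂^2) / l₂)) ≤ -3 := by
    have e1 : (n:ℝ) * l₁ * (-(((0 + h)^2 - 0^2) / l₁ + 2 * A * (0 + h - 0) * x₂ * c))
        = -((n:ℝ) * h^2) - 2 * A * l₁ * c * ((n:ℝ) * h * x₂) := by
      field_simp; ring
    have e23 : (n:ℝ) * l₂ * (-(((x₂ + h)^2 - x₂^2) / l₂))
        + (n:ℝ) * (l₂ + ν₂) * (-(((x₂ - h)^2 - x₂^2) / l₂))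
        = -((n:ℝ) * h^2) - (l₂ + ν₂)/l₂ * ((n:ℝ) * h^2) + (ν₂/l₂) * (2 * (n:ℝ) * h * x₂) := by
      field_simp; ring
    rw [e1]
    have hnhx : 1 ≤ (n:ℝ) * h * x₂ := by
      calc (1:ℝ) = (n:ℝ) * h * h := by nlinarith [hh2]
        _ ≤ (n:ℝ) * h * x₂ := by
            apply mul_le_mul_of_nonneg_left hx₂ (by positivity)
    have hcoef : ν₂ / l₂ ≤ A * l₁ * c := by
      have : ν₂ * c ≤ A := hA
      have h2 : ν₂ * c * (l₁ * c) ≤ A * (l₁ * c) := by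
        apply mul_le_mul_of_nonneg_right this (by positivity)
      have hcc : c * c * (l₁ * l₂) = 1 := by rw [← sq]; exact hc2
      calc ν₂ / l₂ = ν₂ * c * (l₁ * c) := by
            rw [div_eq_iff hl₂.ne']
            linear_combination (-ν₂) * hcc
        _ ≤ A * (l₁ * c) := h2
        _ = A * l₁ * c := by ring
    rw [add_assoc, e23]
    have hlast : (ν₂/l₂) * (2 * (n:ℝ) * h * x₂) - 2 * A * l₁ * c * ((n:ℝ) * h * x₂)
        ≤ 2 * (ν₂/l₂) := by
      nlinarith [mul_nonneg (sub_nonneg.mpr hcoef) (by linarith : (0:ℝ) ≤ (n:ℝ) * h * x₂), (div_pos hν₂ hl₂).le]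
    have hrat : 1 + ν₂/l₂ ≤ (l₂ + ν₂)/l₂ * ((n:ℝ) * h^2) := by
      rw [hh2]
      rw [add_div]
      field_simp
      exact le_refl _
    nlinarith [hh2, hlast, hrat]
  calc (n:ℝ) * l₁ * ((a₀ ^ 2 - ((0 + h) ^ 2 / l₁ + x₂ ^ 2 / l₂ + 2 * A * (0 + h) * x₂ * c))
          - (a₀ ^ 2 - ((0:ℝ) ^ 2 / l₁ + x₂ ^ 2 / l₂ + 2 * A * 0 * x₂ * c)))
      + (n:ℝ) * l₂ * ((a₀ ^ 2 - ((0:ℝ) ^ 2 / l₁ + (x₂ + h) ^ 2 / l₂ + 2 * A * 0 * (x₂ + h) * c))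
          - (a₀ ^ 2 - ((0:ℝ) ^ 2 / l₁ + x₂ ^ 2 / l₂ + 2 * A * 0 * x₂ * c)))
      + (n:ℝ) * (l₂ + ν₂) * ((a₀ ^ 2 - ((0:ℝ) ^ 2 / l₁ + (x₂ - h) ^ 2 / l₂ + 2 * A * 0 * (x₂ - h) * c))
          - (a₀ ^ 2 - ((0:ℝ) ^ 2 / l₁ + x₂ ^ 2 / l₂ + 2 * A * 0 * x₂ * c)))
      = (n:ℝ) * l₁ * (-(((0 + h)^2 - 0^2) / l₁ + 2 * A * (0 + h - 0) * x₂ * c))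
      + (n:ℝ) * l₂ * (-(((x₂ + h)^2 - x₂^2) / l₂))
      + (n:ℝ) * (l₂ + ν₂) * (-(((x₂ - h)^2 - x₂^2) / l₂)) := by ring
    _ ≤ -3 := key
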